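/- Let G₀ and H₀ be subgroups of A₅ of orders 12 and 10 respectively. Then G₀ ∩ H₀ has order 2, and consequently A₅ acts transitively on (A₅/G₀) × (A₅/H₀), a set of size 30. -/

import Mathlib

open Subgroup

lemma cardA5 : Nat.card (alternatingGroup (Fin 5)) = 60 := by
  have h := @two_mul_card_alternatingGroup (Fin 5) _ _ _
  rw [Fintype.card_perm, Fintype.card_fin] at h
  rw [Nat.card_eq_fintype_card]
  have : Nat.factorial 5 = 120 := by decide
  omega

theorem stmt7 (G₀ H₀ : Subgroup (alternatingGroup (Fin 5)))
    (hG₀ : Nat.card G₀ = 12) (hH₀ : Nat.card H₀ = 10) :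
    Nat.card (G₀ ⊓ H₀ : Subgroup (alternatingGroup (Fin 5))) = 2 ∧
    Nat.card ((alternatingGroup (Fin 5) ⧸ G₀) × (alternatingGroup (Fin 5) ⧸ H₀)) = 30 ∧
    ∀ p q : (alternatingGroup (Fin 5) ⧸ G₀) × (alternatingGroup (Fin 5) ⧸ H₀),
      ∃ a : alternatingGroup (Fin 5), a • p = q := by
  classical
  -- |G₀ ⊓ H₀| divides 2
  have h1 : Nat.card (G₀ ⊓ H₀ : Subgroup (alternatingGroup (Fin 5))) ∣ 12 :=
    hG₀ ▸ Subgroup.card_dvd_of_le inf_le_left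
  have h2 : Nat.card (G₀ ⊓ H₀ : Subgroup (alternatingGroup (Fin 5))) ∣ 10 :=
    hH₀ ▸ Subgroup.card_dvd_of_le inf_le_right
  have hdvd : Nat.card (G₀ ⊓ H₀ : Subgroup (alternatingGroup (Fin 5))) ∣ 2 := by
    have hg : Nat.gcd 12 10 = 2 := by norm_num
    exact hg ▸ Nat.dvd_gcd h1 h2
  -- |G₀ ⊓ H₀| ≠ 1
  have hne1 : Nat.card (G₀ ⊓ H₀ : Subgroup (alternatingGroup (Fin 5))) ≠ 1 := by
    intro hone
    have hbot : G₀ ⊓ H₀ = ⊥ := Subgroup.eq_bot_of_card_eq _ hone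
    have hdis : Disjoint G₀ H₀ := disjoint_iff.mpr hbot
    have hinj := Subgroup.mul_injective_of_disjoint hdis
    have hle := Nat.card_le_card_of_injective _ hinj
    rw [Nat.card_prod, hG₀, hH₀, cardA5] at hle
    omega
  have hcard2 : Nat.card (G₀ ⊓ H₀ : Subgroup (alternatingGroup (Fin 5))) = 2 := by
    rcases (Nat.dvd_prime Nat.prime_two).mp hdvd with h | h
    · exact absurd h hne1
    · exact h
  -- the multiplication map G₀ × H₀ → A₅ is surjective
  have hsurj : ∀ x : alternatingGroup (Fin 5),
      ∃ g : G₀, ∃ h : H₀, (g : alternatingGroup (Fin 5)) * h = x := by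
    intro x
    set f : G₀ × H₀ → alternatingGroup (Fin 5) := fun p => (p.1 : _) * p.2 with hf
    have hfib : ∀ b ∈ Finset.univ.image f,
        (Finset.univ.filter fun a => f a = b).card ≤ 2 := by
      intro b _
      rcases (Finset.univ.filter fun a => f a = b).eq_empty_or_nonempty with he | hne
      · simp [he]
      obtain ⟨⟨g₀, h₀⟩, hmem⟩ := hne
      have hb₀ : (g₀ : alternatingGroup (Fin 5)) * h₀ = b := by
        simpa [f] using (Finset.mem_filter.mp hmem).2
      have key : (Finset.univ.filter fun a => f a = b).card ≤
          (Finset.univ.filter fun y : alternatingGroup (Fin 5) => y ∈ G₀ ⊓ H₀).card := by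
        apply Finset.card_le_card_of_injOn (fun a => (g₀ : alternatingGroup (Fin 5))⁻¹ * a.1)
        · intro a ha
          have hb : (a.1 : alternatingGroup (Fin 5)) * a.2 = b := by
            simpa [f] using (Finset.mem_filter.mp ha).2
          simp only [Finset.coe_filter, Finset.mem_coe, Finset.mem_filter, Finset.mem_univ, true_and, Set.mem_setOf_eq]
          refine Subgroup.mem_inf.mpr ⟨mul_mem (inv_mem g₀.2) a.1.2, ?_⟩
          have heq : (g₀ : alternatingGroup (Fin 5))⁻¹ * a.1 =
              (h₀ : alternatingGroup (Fin 5)) * (a.2 : alternatingGroup (Fin 5))⁻¹ := by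
            have hh : (g₀ : alternatingGroup (Fin 5)) * h₀ =
                (a.1 : alternatingGroup (Fin 5)) * a.2 := by rw [hb₀, hb]
            rw [eq_comm, mul_inv_eq_iff_eq_mul, mul_assoc, ← hh]
            group
          rw [heq]
          exact mul_mem h₀.2 (inv_mem a.2.2)
        · intro a ha a' ha' heq
          have hb : (a.1 : alternatingGroup (Fin 5)) * a.2 = b := by
            simpa [f] using (Finset.mem_filter.mp (Finset.mem_coe.mp ha)).2
          have hb' : (a'.1 : alternatingGroup (Fin 5)) * a'.2 = b := by
            simpa [f] using (Finset.mem_filter.mp (Finset.mem_coe.mp ha')).2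
          have e1 : a.1 = a'.1 := Subtype.ext (mul_left_cancel heq)
          have e2 : a.2 = a'.2 := by
            apply Subtype.ext
            have : (a.1 : alternatingGroup (Fin 5)) * a.2 = (a.1 : _) * a'.2 := by
              rw [hb, ← hb', e1]
            exact mul_left_cancel this
          exact Prod.ext e1 e2
      have hcardfilter :
          (Finset.univ.filter fun y : alternatingGroup (Fin 5) => y ∈ G₀ ⊓ H₀).card = 2 := by
        rw [← Fintype.card_subtype, ← Nat.card_eq_fintype_card]
        exact hcard2
      omega
    have hmain := Finset.card_le_mul_card_image (Finset.univ : Finset (G₀ × H₀)) 2 hfib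
    have hdom : (Finset.univ : Finset (G₀ × H₀)).card = 120 := by
      rw [Finset.card_univ, ← Nat.card_eq_fintype_card, Nat.card_prod, hG₀, hH₀]
    have himle : (Finset.univ.image f).card ≤ 60 := by
      have h := Finset.card_le_univ (Finset.univ.image f)
      rwa [← Nat.card_eq_fintype_card, cardA5] at h
    have himeq : (Finset.univ.image f).card = Fintype.card (alternatingGroup (Fin 5)) := by
      rw [← Nat.card_eq_fintype_card, cardA5]
      omega
    have huniv : Finset.univ.image f = Finset.univ := Finset.eq_univ_of_card _ himeq
    have hx : x ∈ Finset.univ.image f := huniv ▸ Finset.mem_univ x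
    obtain ⟨⟨g, h⟩, -, hgh⟩ := Finset.mem_image.mp hx
    exact ⟨g, h, hgh⟩
  -- cardinality of the product of quotients
  have hq1 : Nat.card (alternatingGroup (Fin 5) ⧸ G₀) = 5 := by
    have := Subgroup.card_eq_card_quotient_mul_card_subgroup G₀
    rw [cardA5, hG₀] at this
    omega
  have hq2 : Nat.card (alternatingGroup (Fin 5) ⧸ H₀) = 6 := by
    have := Subgroup.card_eq_card_quotient_mul_card_subgroup H₀
    rw [cardA5, hH₀] at this
    omega
  refine ⟨hcard2, by rw [Nat.card_prod, hq1, hq2], ?_⟩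
  -- transitivity
  have base : ∀ p : (alternatingGroup (Fin 5) ⧸ G₀) × (alternatingGroup (Fin 5) ⧸ H₀),
      ∃ a : alternatingGroup (Fin 5),
        a • (((1 : alternatingGroup (Fin 5)) : alternatingGroup (Fin 5) ⧸ G₀),
             ((1 : alternatingGroup (Fin 5)) : alternatingGroup (Fin 5) ⧸ H₀)) = p := by
    rintro ⟨x, y⟩
    obtain ⟨b, rfl⟩ := QuotientGroup.mk_surjective x
    obtain ⟨c, rfl⟩ := QuotientGroup.mk_surjective y
    obtain ⟨g, h, hgh⟩ := hsurj (b⁻¹ * c)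
    refine ⟨b * g, ?_⟩
    have e1 : (b * (g : alternatingGroup (Fin 5))) •
        ((1 : alternatingGroup (Fin 5)) : alternatingGroup (Fin 5) ⧸ G₀) = (b : _ ⧸ G₀) := by
      show (((b * (g : alternatingGroup (Fin 5))) * 1 : alternatingGroup (Fin 5)) : _ ⧸ G₀) = _
      rw [mul_one]
      refine (QuotientGroup.eq).mpr ?_
      have : (b * (g : alternatingGroup (Fin 5)))⁻¹ * b = (g : alternatingGroup (Fin 5))⁻¹ := by
        group
      rw [this]
      exact inv_mem g.2
    have e2 : (b * (g : alternatingGroup (Fin 5))) •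
        ((1 : alternatingGroup (Fin 5)) : alternatingGroup (Fin 5) ⧸ H₀) = (c : _ ⧸ H₀) := by
      show (((b * (g : alternatingGroup (Fin 5))) * 1 : alternatingGroup (Fin 5)) : _ ⧸ H₀) = _
      rw [mul_one]
      refine (QuotientGroup.eq).mpr ?_
      have : (b * (g : alternatingGroup (Fin 5)))⁻¹ * c = (h : alternatingGroup (Fin 5)) := by
        rw [mul_inv_rev, mul_assoc, ← hgh]
        group
      rw [this]
      exact h.2
    exact Prod.ext e1 e2
  intro p q
  obtain ⟨a₁, ha₁⟩ := base p
  obtain ⟨a₂, ha₂⟩ := base q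
  refine ⟨a₂ * a₁⁻¹, ?_⟩
  rw [← ha₁, ← ha₂, smul_smul]
  congr 1
  group
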